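/- In the pre-extension setting: the bicenter K_A is a two-sided ideal of A; for every x ∈ R, φ_x(K_A) ⊆ K_A and ψ_x(K_A) ⊆ K_A; and the restrictions of φ_x and ψ_x to K_A are unchanged if φ_x is replaced by φ_x + l_b or ψ_x is replaced by ψ_x + r_b for any b ∈ A. Hence K_A becomes an R-bimodule under x·c = φ_x(c), c·x = ψ_x(c), and this structure is independent of the choice of φ_x ∈ φ_x + L(A) and ψ_x ∈ ψ_x + R(A). -/
import Mathlib


variable {R A : Type*}

/-- The bicenter `K_A = {c ∈ A : c·a = 0 = a·c for all a}`. -/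
def bicenter (A : Type*) [NonUnitalRing A] : Set A :=
  {c | ∀ b : A, c * b = 0 ∧ b * c = 0}

/-- A pre-extension datum `(φ, ψ, f, g)` of the ring `A` by the ring `R`:
`φ_x, ψ_x ∈ End_ℤ(A)` and `f, g : R² → A` satisfying the relations (10) and the
defining relations of the factor sets. -/
def IsPreExtension [Ring R] [NonUnitalRing A]
    (φ ψ : R → AddMonoid.End A) (f g : R → R → A) : Prop :=
  (∀ a : A, φ 1 a = a) ∧
  (∀ a : A, ψ 1 a = a) ∧
  (∀ (x : R) (a b : A), a * φ x b = ψ x a * b) ∧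
  (∀ (x : R) (a b : A), φ x (a * b) = φ x a * b) ∧
  (∀ (x : R) (a b : A), ψ x (b * a) = b * ψ x a) ∧
  (∀ (x : R) (a b : A), ψ x b * a = b * φ x a) ∧
  (∀ (x y : R) (a : A), φ x (ψ y a) = ψ y (φ x a)) ∧
  (∀ (x y : R) (a : A), φ x (φ y a) = φ (x * y) a + g x y * a) ∧
  (∀ (x y : R) (a : A), ψ y (ψ x a) = ψ (x * y) a + a * g x y) ∧
  (∀ (x y : R) (a : A), φ x a + φ y a = φ (x + y) a + f x y * a) ∧
  (∀ (x y : R) (a : A), ψ x a + ψ y a = ψ (x + y) a + a * f x y)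

variable [Ring R] [NonUnitalRing A]

/-- The obstruction component `ξ`. -/
def xiObs (f : R → R → A) (x y z : R) : A :=
  f y z - f (x + y) z + f x (y + z) - f x y

/-- The obstruction component `η`. -/
def etaObs (f : R → R → A) (x y : R) : A :=
  f x y - f y x

/-- The obstruction component `α`. -/
def alphaObs (φ ψ : R → AddMonoid.End A) (g : R → R → A) (x y z : R) : A :=
  φ x (g y z) - g (x * y) z + g x (y * z) - ψ z (g x y)

/-- The obstruction component `λ`. -/
def lambdaObs (φ : R → AddMonoid.End A) (f g : R → R → A) (x y z : R) : A :=
  φ x (f y z) - f (x * y) (x * z) + g x (y + z) - g x y - g x z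

/-- The obstruction component `ρ`. -/
def rhoObs (ψ : R → AddMonoid.End A) (f g : R → R → A) (x y z : R) : A :=
  ψ z (f x y) - f (x * z) (y * z) + g (x + y) z - g x z - g y z

/-- The bicenter `K_A` is a two-sided ideal of `A`, stable under every
`φ_x` and `ψ_x`; the restrictions of `φ_x, ψ_x` to `K_A` are unchanged when `φ_x` is
replaced by `φ_x + l_b` or `ψ_x` by `ψ_x + r_b`; and `x·c = φ_x(c)`, `c·x = ψ_x(c)`
make `K_A` an `R`-bimodule. -/
theorem bicenter_bimodule_structure
    [Nontrivial R] (φ ψ : R → AddMonoid.End A) (f g : R → R → A)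
    (h : IsPreExtension φ ψ f g) :
    -- K_A is a two-sided ideal of A
    ((0 : A) ∈ bicenter A) ∧
    (∀ c c' : A, c ∈ bicenter A → c' ∈ bicenter A → c + c' ∈ bicenter A) ∧
    (∀ c : A, c ∈ bicenter A → -c ∈ bicenter A) ∧
    (∀ c a : A, c ∈ bicenter A → a * c ∈ bicenter A ∧ c * a ∈ bicenter A) ∧
    -- φ_x and ψ_x preserve K_A
    (∀ (x : R) (c : A), c ∈ bicenter A → φ x c ∈ bicenter A ∧ ψ x c ∈ bicenter A) ∧
    -- the restrictions to K_A do not change under φ_x ↦ φ_x + l_b, ψ_x ↦ ψ_x + r_b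
    (∀ (x : R) (b c : A), c ∈ bicenter A →
      φ x c + b * c = φ x c ∧ ψ x c + c * b = ψ x c) ∧
    -- K_A is an R-bimodule under x·c = φ_x(c), c·x = ψ_x(c)
    (∀ c ∈ bicenter A, ∀ x y : R,
      φ (x + y) c = φ x c + φ y c ∧
      φ (x * y) c = φ x (φ y c) ∧
      φ 1 c = c ∧
      ψ (x + y) c = ψ x c + ψ y c ∧
      ψ (x * y) c = ψ y (ψ x c) ∧
      ψ 1 c = c ∧
      φ x (ψ y c) = ψ y (φ x c)) := by
  obtain ⟨h1, h2, h3, h4, h5, h6, h7, h8, h9, h10, h11⟩ := h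
  have hbic : ∀ c : A, c ∈ bicenter A ↔ ∀ b : A, c * b = 0 ∧ b * c = 0 :=
    fun c => Iff.rfl
  refine ⟨?_, ?_, ?_, ?_, ?_, ?_, ?_⟩
  · intro b; simp
  · intro c c' hc hc' b
    constructor
    · rw [add_mul, (hc b).1, (hc' b).1, add_zero]
    · rw [mul_add, (hc b).2, (hc' b).2, add_zero]
  · intro c hc b
    constructor
    · rw [neg_mul, (hc b).1, neg_zero]
    · rw [mul_neg, (hc b).2, neg_zero]
  · intro c a hc
    constructor
    · intro b
      constructor
      · rw [mul_assoc, (hc b).1, mul_zero]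
      · rw [← mul_assoc, (hc (b * a)).2]
    · intro b
      constructor
      · rw [mul_assoc, (hc (a * b)).1]
      · rw [← mul_assoc, (hc b).2, zero_mul]
  · intro x c hc
    constructor
    · intro b
      constructor
      · rw [← h4 x c b, (hc b).1, map_zero]
      · rw [h3 x b c, (hc (ψ x b)).2]
    · intro b
      constructor
      · rw [h6 x b c, (hc (φ x b)).1]
      · rw [← h5 x c b, (hc b).2, map_zero]
  · intro x b c hc
    exact ⟨by rw [(hc b).2, add_zero], by rw [(hc b).1, add_zero]⟩
  · intro c hc x y
    refine ⟨?_, ?_, h1 c, ?_, ?_, h2 c, h7 x y c⟩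
    · have := h10 x y c; rw [(hc _).2, add_zero] at this; exact this.symm
    · have := h8 x y c; rw [(hc _).2, add_zero] at this; exact this.symm
    · have := h11 x y c; rw [(hc _).1, add_zero] at this; exact this.symm
    · have := h9 x y c; rw [(hc _).1, add_zero] at this; exact this.symm
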